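/- Let s be a real Gaussian random variable with variance σ². For t ∈ R and p ∈ (0, 1/e], set L = 8σ^{-1}√(ln(1/p)) and let 0 ≤ ε ≤ 1/L. If Pr[s ≥ t - ε] ≥ p and Pr[s ≤ t] ≥ p, then Pr[s ≥ t - ε | s ≤ t] ≤ e³·ε·L·Pr[s ≥ t]. -/

import Mathlib

set_option maxHeartbeats 1000000

open MeasureTheory ProbabilityTheory

namespace Stmt6Aux

open Real
open scoped NNReal ENNReal

lemma pdf_mono (m : ℝ) (v : ℝ≥0) (hv : 0 < (v:ℝ)) {x y : ℝ} (h : (y - m)^2 ≤ (x - m)^2) :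
    gaussianPDFReal m v x ≤ gaussianPDFReal m v y := by
  unfold gaussianPDFReal
  have hπ := Real.pi_pos
  apply mul_le_mul_of_nonneg_left _ (by positivity)
  apply Real.exp_le_exp.mpr
  have h2v : (0:ℝ) < 2*v := by linarith
  apply div_le_div_of_nonneg_right ?_ h2v.le
  linarith

lemma pdf_neg (m : ℝ) (v : ℝ≥0) (x : ℝ) : gaussianPDFReal (-m) v (-x) = gaussianPDFReal m v x := by
  unfold gaussianPDFReal
  ring_nf

lemma gr_toReal (m : ℝ) {v : ℝ≥0} (hv : v ≠ 0) (s : Set ℝ) :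
    (gaussianReal m v s).toReal = ∫ x in s, gaussianPDFReal m v x := by
  rw [gaussianReal_apply_eq_integral _ hv, ENNReal.toReal_ofReal]
  exact integral_nonneg fun x => gaussianPDFReal_nonneg _ _ _

lemma interval_bound (m : ℝ) {v : ℝ≥0} (hv : v ≠ 0) {a b M : ℝ} (hab : a ≤ b)
    (hM : ∀ x ∈ Set.Icc a b, gaussianPDFReal m v x ≤ M) :
    (gaussianReal m v {x | a ≤ x ∧ x ≤ b}).toReal ≤ (b - a) * M := by
  have hs : {x : ℝ | a ≤ x ∧ x ≤ b} = Set.Icc a b := rfl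
  rw [gr_toReal m hv, hs]
  have h1 : ∫ x in Set.Icc a b, gaussianPDFReal m v x ≤ ∫ x in Set.Icc a b, M :=
    setIntegral_mono_on ((integrable_gaussianPDFReal m v).integrableOn)
      (integrableOn_const (by rw [Real.volume_Icc]; exact ENNReal.ofReal_ne_top))
      measurableSet_Icc hM
  rw [setIntegral_const, measureReal_def, Real.volume_Icc, ENNReal.toReal_ofReal (by linarith), smul_eq_mul] at h1
  exact h1

lemma tail_upper (m : ℝ) {v : ℝ≥0} (hv : 0 < (v:ℝ)) {a : ℝ} (ha : m ≤ a) :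
    (gaussianReal m v {x | a ≤ x}).toReal ≤ rexp (-(a - m)^2 / (2*v)) := by
  have hvne : v ≠ 0 := by
    intro h; rw [h] at hv; simp at hv
  rw [gr_toReal m hvne]
  have hs : {x : ℝ | a ≤ x} = Set.Ici a := rfl
  rw [hs]
  have hle : ∀ x ∈ Set.Ici a, gaussianPDFReal m v x
      ≤ rexp (-(a-m)^2/(2*v)) * gaussianPDFReal a v x := by
    intro x hx
    simp only [Set.mem_Ici] at hx
    unfold gaussianPDFReal
    rw [mul_left_comm, ← Real.exp_add]
    apply mul_le_mul_of_nonneg_left _ (by positivity)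
    apply Real.exp_le_exp.mpr
    rw [← add_div]
    apply div_le_div_of_nonneg_right ?_ (by linarith)
    nlinarith [sq_nonneg (x - a)]
  calc ∫ x in Set.Ici a, gaussianPDFReal m v x
      ≤ ∫ x in Set.Ici a, rexp (-(a-m)^2/(2*v)) * gaussianPDFReal a v x :=
        setIntegral_mono_on ((integrable_gaussianPDFReal m v).integrableOn)
          (((integrable_gaussianPDFReal a v).const_mul _).integrableOn)
          measurableSet_Ici hle
    _ ≤ ∫ x, rexp (-(a-m)^2/(2*v)) * gaussianPDFReal a v x :=
        setIntegral_le_integral ((integrable_gaussianPDFReal a v).const_mul _)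
          (ae_of_all _ fun x => mul_nonneg (Real.exp_nonneg _) (gaussianPDFReal_nonneg _ _ _))
    _ = rexp (-(a-m)^2/(2*v)) := by
        rw [integral_const_mul, integral_gaussianPDFReal_eq_one a hvne, mul_one]

lemma tail_lower (m : ℝ) {v : ℝ≥0} {σ : ℝ} (hσ : 0 < σ) (hvσ : (v:ℝ) = σ^2) {a : ℝ}
    (ha : m ≤ a) :
    rexp (-(3/2)) * (σ^2/((a - m) + σ)) * gaussianPDFReal m v a
      ≤ (gaussianReal m v {x | a ≤ x}).toReal := by
  have hv : 0 < (v:ℝ) := by rw [hvσ]; positivity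
  have hvne : v ≠ 0 := by intro h; rw [h] at hv; simp at hv
  set d := a - m with hd
  have hd0 : 0 ≤ d := sub_nonneg.mpr ha
  have hds : 0 < d + σ := by linarith
  set h := σ^2/(d + σ) with hh
  have hh0 : 0 < h := by positivity
  have hhds : h * (d + σ) = σ^2 := div_mul_cancel₀ _ hds.ne'
  have hhσ : h ≤ σ := by rw [hh, div_le_iff₀ hds]; nlinarith
  rw [gr_toReal m hvne]
  have hs : {x : ℝ | a ≤ x} = Set.Ici a := rfl
  rw [hs]
  have step1 : ∫ x in Set.Icc a (a+h), gaussianPDFReal m v x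
      ≤ ∫ x in Set.Ici a, gaussianPDFReal m v x := by
    apply setIntegral_mono_set ((integrable_gaussianPDFReal m v).integrableOn)
      (ae_of_all _ fun x => gaussianPDFReal_nonneg _ _ _)
    exact HasSubset.Subset.eventuallyLE (fun x hx => hx.1)
  have step2 : h * gaussianPDFReal m v (a+h) ≤ ∫ x in Set.Icc a (a+h), gaussianPDFReal m v x := by
    have hmono : ∀ x ∈ Set.Icc a (a+h), gaussianPDFReal m v (a+h) ≤ gaussianPDFReal m v x := by
      intro x hx
      apply pdf_mono m v hv
      have h1 := hx.1; have h2 := hx.2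
      nlinarith
    have := setIntegral_mono_on
      (integrableOn_const (by rw [Real.volume_Icc]; exact ENNReal.ofReal_ne_top))
      ((integrable_gaussianPDFReal m v).integrableOn) measurableSet_Icc hmono
    rw [setIntegral_const, measureReal_def, Real.volume_Icc, ENNReal.toReal_ofReal (by linarith),
      smul_eq_mul, show a + h - a = h by ring] at this
    exact this
  have step3 : rexp (-(3/2)) * gaussianPDFReal m v a ≤ gaussianPDFReal m v (a+h) := by
    unfold gaussianPDFReal
    rw [mul_left_comm, ← Real.exp_add]
    apply mul_le_mul_of_nonneg_left _ (by have := Real.pi_pos; positivity)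
    apply Real.exp_le_exp.mpr
    have h2v : (0:ℝ) < 2*v := by linarith
    have key : (a + h - m)^2 - (a - m)^2 ≤ 3 * (v:ℝ) := by
      rw [hvσ]
      nlinarith [hhds, hhσ, hh0.le, hd0, hσ.le,
        mul_le_mul_of_nonneg_left hhσ hh0.le, mul_le_mul_of_nonneg_right hhσ hσ.le]
    have h32 : 3 * (v:ℝ) / (2*(v:ℝ)) = 3/2 := by
      rw [div_eq_iff h2v.ne']; ring
    have h' : ((a + h - m)^2 - (a - m)^2)/(2*(v:ℝ)) ≤ 3*(v:ℝ)/(2*(v:ℝ)) :=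
      div_le_div_of_nonneg_right key h2v.le
    rw [h32, sub_div] at h'
    simp only [neg_div]
    linarith
  calc rexp (-(3/2)) * (σ^2/(d + σ)) * gaussianPDFReal m v a
      = h * (rexp (-(3/2)) * gaussianPDFReal m v a) := by rw [hh]; ring
    _ ≤ h * gaussianPDFReal m v (a+h) :=
        mul_le_mul_of_nonneg_left step3 hh0.le
    _ ≤ ∫ x in Set.Icc a (a+h), gaussianPDFReal m v x := step2
    _ ≤ ∫ x in Set.Ici a, gaussianPDFReal m v x := step1

lemma gr_reflect (m : ℝ) (v : ℝ≥0) (a : ℝ) :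
    gaussianReal m v {x | x ≤ a} = gaussianReal (-m) v {x | -a ≤ x} := by
  have hmap : (gaussianReal m v).map (fun x => (-1:ℝ) * x) = gaussianReal (-m) v := by
    rw [gaussianReal_map_const_mul (-1 : ℝ)]
    congr 1
    · norm_num
    · apply NNReal.coe_injective
      push_cast
      norm_num
  rw [← hmap, Measure.map_apply (by fun_prop) (by
    have : {x : ℝ | -a ≤ x} = Set.Ici (-a) := rfl
    rw [this]; exact measurableSet_Ici)]
  congr 1
  ext x
  simp only [Set.mem_preimage, Set.mem_setOf_eq]
  constructor <;> intro hx <;> linarith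

lemma gr_translate (m : ℝ) (v : ℝ≥0) :
    gaussianReal m v {x | m ≤ x} = gaussianReal (-m) v {x | -m ≤ x} := by
  have hmap : (gaussianReal (-m) v).map (· + 2*m) = gaussianReal m v := by
    rw [gaussianReal_map_add_const]
    ring_nf
  rw [← hmap, Measure.map_apply (by fun_prop) (by
    have : {x : ℝ | m ≤ x} = Set.Ici m := rfl
    rw [this]; exact measurableSet_Ici)]
  congr 1
  ext x
  simp only [Set.mem_preimage, Set.mem_setOf_eq]
  constructor <;> intro hx <;> linarith

lemma half_le (m : ℝ) {v : ℝ≥0} {a : ℝ} (ha : a ≤ m) :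
    1/2 ≤ (gaussianReal m v {x | a ≤ x}).toReal := by
  have hsum : (1:ℝ≥0∞) ≤ gaussianReal m v {x | m ≤ x} + gaussianReal m v {x | m ≤ x} := by
    have hunion : {x : ℝ | x ≤ m} ∪ {x | m ≤ x} = Set.univ := by
      ext x; simp [le_total x m]
    calc (1:ℝ≥0∞) = gaussianReal m v Set.univ := (measure_univ).symm
      _ = gaussianReal m v ({x | x ≤ m} ∪ {x | m ≤ x}) := by rw [hunion]
      _ ≤ gaussianReal m v {x | x ≤ m} + gaussianReal m v {x | m ≤ x} := measure_union_le _ _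
      _ = gaussianReal m v {x | m ≤ x} + gaussianReal m v {x | m ≤ x} := by
          rw [gr_reflect, ← gr_translate]
  have hne : gaussianReal m v {x | m ≤ x} ≠ ⊤ := measure_ne_top _ _
  have h1 : (1:ℝ) ≤ (gaussianReal m v {x | m ≤ x}).toReal
      + (gaussianReal m v {x | m ≤ x}).toReal := by
    have := ENNReal.toReal_mono (by finiteness) hsum
    rwa [ENNReal.toReal_one, ENNReal.toReal_add hne hne] at this
  have hmono : (gaussianReal m v {x | m ≤ x}).toReal ≤ (gaussianReal m v {x | a ≤ x}).toReal := by
    apply ENNReal.toReal_mono (measure_ne_top _ _)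
    exact measure_mono fun x hx => le_trans ha hx
  linarith

lemma final_chain {N ε F s' σr d U D : ℝ} (hε : 0 ≤ ε) (hF : 0 ≤ F) (hσ : 0 < σr)
    (hs' : 1 ≤ s') (hd : 0 ≤ d) (hkey : d + σr ≤ 4 * s' * σr)
    (hN : N ≤ ε * (rexp (3/2) * F))
    (hhalf : 1/2 ≤ U) (hmills : rexp (-(3/2)) * (σr^2/(d + σr)) * F ≤ D) (hU0 : 0 ≤ U) :
    N ≤ rexp 1 ^ 3 * ε * (8 * σr⁻¹ * s') * (U * D) := by
  have hden : 0 < d + σr := by linarith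
  have hs'0 : 0 < s' := by linarith
  have hcore : rexp (3/2)
      ≤ rexp 1 ^ 3 * (8 * σr⁻¹ * s') * (1/2) * (rexp (-(3/2)) * (σr^2/(d+σr))) := by
    have h2 : rexp 1 ^ (3:ℕ) * rexp (-(3/2)) = rexp (3/2) := by
      rw [Real.exp_one_pow, ← Real.exp_add]; norm_num
    have h1 : rexp 1 ^ 3 * (8 * σr⁻¹ * s') * (1/2) * (rexp (-(3/2)) * (σr^2/(d+σr)))
        = rexp (3/2) * (4 * s' * σr) / (d + σr) := by
      rw [← h2]; field_simp; ring
    rw [h1, le_div_iff₀ hden]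
    have := mul_le_mul_of_nonneg_left hkey (Real.exp_pos (3/2)).le
    linarith
  have hmills0 : 0 ≤ rexp (-(3/2)) * (σr^2/(d + σr)) * F := by positivity
  calc N ≤ ε * (rexp (3/2) * F) := hN
    _ ≤ ε * ((rexp 1 ^ 3 * (8 * σr⁻¹ * s') * (1/2) * (rexp (-(3/2)) * (σr^2/(d+σr)))) * F) := by
        apply mul_le_mul_of_nonneg_left _ hε
        exact mul_le_mul_of_nonneg_right hcore hF
    _ = rexp 1 ^ 3 * ε * (8 * σr⁻¹ * s')
        * ((1/2) * (rexp (-(3/2)) * (σr^2/(d+σr)) * F)) := by ring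
    _ ≤ rexp 1 ^ 3 * ε * (8 * σr⁻¹ * s') * (U * D) := by
        apply mul_le_mul_of_nonneg_left _
          (mul_nonneg (mul_nonneg (by positivity) hε) (by positivity))
        exact mul_le_mul hhalf hmills hmills0 hU0

end Stmt6Aux

open Stmt6Aux Real in
/-- Condition-reversing interval lemma for a Gaussian variable `s` with standard
deviation `σ`: with `L = 8σ⁻¹√(ln p⁻¹)` and `0 ≤ ε ≤ 1/L`, if `Pr[s ≥ t-ε] ≥ p` and
`Pr[s ≤ t] ≥ p` then `Pr[s ≥ t-ε | s ≤ t] ≤ e³·ε·L·Pr[s ≥ t]`. -/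
theorem stmt_6 (m : ℝ) (σ : NNReal) (hσ : 0 < σ) (t p ε : ℝ)
    (hp : p ∈ Set.Ioc (0 : ℝ) (Real.exp 1)⁻¹)
    (hε0 : 0 ≤ ε) (hε1 : ε ≤ (8 * (σ : ℝ)⁻¹ * Real.sqrt (Real.log p⁻¹))⁻¹)
    (h1 : ENNReal.ofReal p ≤ gaussianReal m (σ ^ 2) {x | t - ε ≤ x})
    (h2 : ENNReal.ofReal p ≤ gaussianReal m (σ ^ 2) {x | x ≤ t}) :
    (gaussianReal m (σ ^ 2) {x | t - ε ≤ x ∧ x ≤ t}).toReal /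
        (gaussianReal m (σ ^ 2) {x | x ≤ t}).toReal ≤
      Real.exp 1 ^ 3 * ε * (8 * (σ : ℝ)⁻¹ * Real.sqrt (Real.log p⁻¹)) *
        (gaussianReal m (σ ^ 2) {x | t ≤ x}).toReal := by
  have hσ0 : (0:ℝ) < (σ:ℝ) := by exact_mod_cast hσ
  set σr : ℝ := (σ:ℝ) with hσrdef
  have hvσ : ((σ^2 : NNReal):ℝ) = σr^2 := by push_cast; ring
  have hv0 : (0:ℝ) < ((σ^2 : NNReal):ℝ) := by rw [hvσ]; positivity
  have hvne : (σ^2 : NNReal) ≠ 0 := pow_ne_zero 2 hσ.ne'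
  have hp0 : 0 < p := hp.1
  -- log and sqrt facts
  have hL1 : 1 ≤ Real.log p⁻¹ := by
    rw [Real.log_inv]
    have h := Real.log_le_log hp0 hp.2
    rw [Real.log_inv, Real.log_exp] at h
    linarith
  set s' : ℝ := Real.sqrt (Real.log p⁻¹) with hs'def
  have hs'1 : 1 ≤ s' := Real.one_le_sqrt.mpr hL1
  have hs'0 : 0 < s' := by linarith
  have hs'sq : s'^2 = Real.log p⁻¹ := Real.sq_sqrt (by linarith)
  have hε1' : ε ≤ σr / (8 * s') := by
    have heq : (8 * σr⁻¹ * s')⁻¹ = σr / (8 * s') := by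
      rw [eq_div_iff (by positivity)]
      field_simp
    rwa [heq] at hε1
  have hεσ : ε ≤ σr := by
    have : σr / (8 * s') ≤ σr := by
      rw [div_le_iff₀ (by positivity)]
      nlinarith
    linarith
  -- sqrt 2 bound
  have h2' : Real.sqrt 2 ≤ 3/2 := by
    rw [show (3/2:ℝ) = Real.sqrt ((3/2)^2) from (Real.sqrt_sq (by norm_num)).symm]
    apply Real.sqrt_le_sqrt; norm_num
  have hsqrt2nn : 0 ≤ Real.sqrt 2 := Real.sqrt_nonneg 2
  -- measure bounds to real
  have hDp : p ≤ (gaussianReal m (σ^2) {x | x ≤ t}).toReal := by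
    have h := ENNReal.toReal_mono (measure_ne_top _ _) h2
    rwa [ENNReal.toReal_ofReal hp0.le] at h
  have hRp : p ≤ (gaussianReal m (σ^2) {x | t - ε ≤ x}).toReal := by
    have h := ENNReal.toReal_mono (measure_ne_top _ _) h1
    rwa [ENNReal.toReal_ofReal hp0.le] at h
  have hD0 : 0 < (gaussianReal m (σ^2) {x | x ≤ t}).toReal := lt_of_lt_of_le hp0 hDp
  have hU0 : (0:ℝ) ≤ (gaussianReal m (σ^2) {x | t ≤ x}).toReal := ENNReal.toReal_nonneg
  have hF0 : 0 < gaussianPDFReal m (σ^2) t := gaussianPDFReal_pos _ _ _ hvne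
  rw [div_le_iff₀ hD0]
  -- tail-to-distance conversion
  have dist_bound : ∀ d : ℝ, 0 ≤ d → p ≤ rexp (-d^2 / (2*((σ^2:NNReal):ℝ))) →
      d ≤ Real.sqrt 2 * s' * σr := by
    intro d hd hpe
    have hlog := Real.log_le_log hp0 hpe
    rw [Real.log_exp] at hlog
    have hsq : d^2 ≤ 2 * Real.log p⁻¹ * σr^2 := by
      have h2v : (0:ℝ) < 2*((σ^2:NNReal):ℝ) := by linarith
      have h3 : d^2/(2*((σ^2:NNReal):ℝ)) ≤ Real.log p⁻¹ := by
        rw [Real.log_inv]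
        have hng : -d^2 / (2*((σ^2:NNReal):ℝ)) = -(d^2/(2*((σ^2:NNReal):ℝ))) := by ring
        rw [hng] at hlog
        linarith
      rw [div_le_iff₀ h2v, hvσ] at h3
      nlinarith [h3]
    have hB : (Real.sqrt 2 * s' * σr)^2 = 2 * Real.log p⁻¹ * σr^2 := by
      rw [mul_pow, mul_pow, Real.sq_sqrt (by norm_num : (0:ℝ) ≤ 2), hs'sq]
    nlinarith [hsq, hB, hd, mul_nonneg (mul_nonneg hsqrt2nn hs'0.le) hσ0.le]
  rcases le_or_gt t m with hcase | hcase
  · -- Case A : t ≤ m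
    have hN : (gaussianReal m (σ^2) {x | t - ε ≤ x ∧ x ≤ t}).toReal
        ≤ ε * gaussianPDFReal m (σ^2) t := by
      have h := interval_bound m hvne (show t - ε ≤ t by linarith)
        (fun x hx => pdf_mono m (σ^2) hv0 (y := t) (by nlinarith [hx.1, hx.2]))
      rwa [show t - (t - ε) = ε by ring] at h
    have hUhalf : 1/2 ≤ (gaussianReal m (σ^2) {x | t ≤ x}).toReal := half_le m hcase
    -- D lower bound (Mills via reflection)
    have hDlow : rexp (-(3/2)) * (σr^2/((m - t) + σr)) * gaussianPDFReal m (σ^2) t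
        ≤ (gaussianReal m (σ^2) {x | x ≤ t}).toReal := by
      rw [gr_reflect]
      have h := tail_lower (-m) hσ0 hvσ (show -m ≤ -t by linarith) (v := σ^2)
      rw [pdf_neg, show -t - -m = m - t by ring] at h
      exact h
    -- D upper bound → distance bound
    have hz : m - t ≤ Real.sqrt 2 * s' * σr := by
      apply dist_bound _ (by linarith)
      have hup : (gaussianReal m (σ^2) {x | x ≤ t}).toReal
          ≤ rexp (-(m - t)^2 / (2*((σ^2:NNReal):ℝ))) := by
        rw [gr_reflect]
        have h := tail_upper (-m) hv0 (show -m ≤ -t by linarith) (v := σ^2)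
        rwa [show -t - -m = m - t by ring] at h
      linarith
    have hNe : (gaussianReal m (σ^2) {x | t - ε ≤ x ∧ x ≤ t}).toReal
        ≤ ε * (rexp (3/2) * gaussianPDFReal m (σ^2) t) := by
      have h1e : (1:ℝ) ≤ rexp (3/2) := Real.one_le_exp (by norm_num)
      have hnn : 0 ≤ ε * gaussianPDFReal m (σ^2) t * (rexp (3/2) - 1) :=
        mul_nonneg (mul_nonneg hε0 hF0.le) (by linarith)
      nlinarith [hN, hnn]
    have hkey : (m - t) + σr ≤ 4 * s' * σr := by nlinarith
    have h := final_chain hε0 hF0.le hσ0 hs'1 (show (0:ℝ) ≤ m - t by linarith) hkey hNe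
      hUhalf hDlow hU0
    calc (gaussianReal m (σ^2) {x | t - ε ≤ x ∧ x ≤ t}).toReal
        ≤ rexp 1 ^ 3 * ε * (8 * σr⁻¹ * s')
          * ((gaussianReal m (σ^2) {x | t ≤ x}).toReal
            * (gaussianReal m (σ^2) {x | x ≤ t}).toReal) := h
      _ = rexp 1 ^ 3 * ε * (8 * σr⁻¹ * s') * (gaussianReal m (σ^2) {x | t ≤ x}).toReal
          * (gaussianReal m (σ^2) {x | x ≤ t}).toReal := by ring
  · -- Case B : m < t
    set x₀ : ℝ := max (t - ε) m with hx₀def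
    have hx₀1 : t - ε ≤ x₀ := le_max_left _ _
    have hx₀2 : m ≤ x₀ := le_max_right _ _
    have hx₀3 : x₀ ≤ t := max_le (by linarith) hcase.le
    have hN : (gaussianReal m (σ^2) {x | t - ε ≤ x ∧ x ≤ t}).toReal
        ≤ ε * gaussianPDFReal m (σ^2) x₀ := by
      have h := interval_bound m hvne (show t - ε ≤ t by linarith)
        (fun x hx => pdf_mono m (σ^2) hv0 (y := x₀) (by
          rcases le_total x m with hxm | hxm
          · have hxeq : x₀ = m := max_eq_right (le_trans hx.1 hxm)
            rw [hxeq]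
            nlinarith
          · have hxx : x₀ ≤ x := max_le hx.1 hxm
            nlinarith))
      rwa [show t - (t - ε) = ε by ring] at h
    have hDhalf : 1/2 ≤ (gaussianReal m (σ^2) {x | x ≤ t}).toReal := by
      rw [gr_reflect]
      exact half_le (-m) (by linarith)
    have hUlow : rexp (-(3/2)) * (σr^2/((t - m) + σr)) * gaussianPDFReal m (σ^2) t
        ≤ (gaussianReal m (σ^2) {x | t ≤ x}).toReal :=
      tail_lower m hσ0 hvσ hcase.le
    have hz : t - m ≤ Real.sqrt 2 * s' * σr + ε := by
      rcases le_or_gt m (t - ε) with hm | hm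
      · have hup := tail_upper m hv0 hm (v := σ^2)
        have hd : t - ε - m ≤ Real.sqrt 2 * s' * σr := by
          apply dist_bound _ (by linarith)
          linarith [hRp, hup]
        linarith
      · nlinarith [mul_nonneg (mul_nonneg hsqrt2nn hs'0.le) hσ0.le]
    -- density ratio bound
    have hexp : gaussianPDFReal m (σ^2) x₀ ≤ rexp (3/2) * gaussianPDFReal m (σ^2) t := by
      unfold gaussianPDFReal
      rw [mul_left_comm, ← Real.exp_add]
      apply mul_le_mul_of_nonneg_left _ (by have := Real.pi_pos; positivity)
      apply Real.exp_le_exp.mpr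
      have h2v : (0:ℝ) < 2*((σ^2:NNReal):ℝ) := by linarith
      have key : (t - m)^2 - (x₀ - m)^2 ≤ 3 * ((σ^2:NNReal):ℝ) := by
        rw [hvσ]
        have hstep : (t - m)^2 - (x₀ - m)^2 ≤ 2 * ε * (t - m) := by
          nlinarith [sq_nonneg (t - x₀)]
        have hprod : ε * (t - m) ≤ (σr / (8 * s')) * (Real.sqrt 2 * s' * σr + ε) := by
          apply mul_le_mul hε1' hz (by linarith) (by positivity)
        have hexpand : (σr / (8 * s')) * (Real.sqrt 2 * s' * σr) = Real.sqrt 2 * σr^2 / 8 := by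
          field_simp
        have hsecond : (σr / (8 * s')) * ε ≤ (σr / 8) * σr := by
          apply mul_le_mul _ hεσ hε0 (by positivity)
          rw [div_le_div_iff₀ (by positivity) (by norm_num)]
          nlinarith
        nlinarith [hprod, hexpand, hsecond, h2', hσ0]
      have h32 : 3 * ((σ^2:NNReal):ℝ) / (2*((σ^2:NNReal):ℝ)) = 3/2 := by
        rw [div_eq_iff h2v.ne']; ring
      have h' : ((t - m)^2 - (x₀ - m)^2)/(2*((σ^2:NNReal):ℝ))
          ≤ 3*((σ^2:NNReal):ℝ)/(2*((σ^2:NNReal):ℝ)) := div_le_div_of_nonneg_right key h2v.le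
      rw [h32, sub_div] at h'
      simp only [neg_div]
      linarith
    have hNe : (gaussianReal m (σ^2) {x | t - ε ≤ x ∧ x ≤ t}).toReal
        ≤ ε * (rexp (3/2) * gaussianPDFReal m (σ^2) t) := by
      calc (gaussianReal m (σ^2) {x | t - ε ≤ x ∧ x ≤ t}).toReal
          ≤ ε * gaussianPDFReal m (σ^2) x₀ := hN
        _ ≤ ε * (rexp (3/2) * gaussianPDFReal m (σ^2) t) :=
            mul_le_mul_of_nonneg_left hexp hε0
    have hkey : (t - m) + σr ≤ 4 * s' * σr := by nlinarith
    have h := final_chain hε0 hF0.le hσ0 hs'1 (show (0:ℝ) ≤ t - m by linarith) hkey hNe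
      hDhalf hUlow hD0.le
    calc (gaussianReal m (σ^2) {x | t - ε ≤ x ∧ x ≤ t}).toReal
        ≤ rexp 1 ^ 3 * ε * (8 * σr⁻¹ * s')
          * ((gaussianReal m (σ^2) {x | x ≤ t}).toReal
            * (gaussianReal m (σ^2) {x | t ≤ x}).toReal) := h
      _ = rexp 1 ^ 3 * ε * (8 * σr⁻¹ * s') * (gaussianReal m (σ^2) {x | t ≤ x}).toReal
          * (gaussianReal m (σ^2) {x | x ≤ t}).toReal := by ring
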